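/- For every integer r ≥ 1, integers k₁,…,k_r with k_j ≥ 1 for all j and k_r ≥ 2, and every z ∈ ℂ with Re z > 0, the Hurwitz polyzeta functions satisfy the difference equation ζ(k₁,…,k_r|z+1) − ζ(k₁,…,k_r|z) = −z^{−k₁} · ζ(k₂,…,k_r|z+1), where for r = 1 the right-hand side is −z^{−k₁} (using the convention ζ( |z) = 1 for the empty tuple). -/

import Mathlib

set_option maxHeartbeats 1000000

/-- The Hurwitz polyzeta function `ζ(s₁,…,s_r|z)`, the sum over strictly increasing
tuples `0 ≤ n₁ < ⋯ < n_r` of non-negative integers of `∏ j, (z + n_j)^(-s_j)`.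
For the empty list of exponents this is `1`. -/
noncomputable def hurwitzPolyzeta (s : List ℂ) (z : ℂ) : ℂ :=
  ∑' n : {f : Fin s.length → ℕ // StrictMono f},
    ∏ j : Fin s.length, (z + (n.1 j : ℂ)) ^ (-(s.get j))



abbrev SM (m : ℕ) := {f : Fin m → ℕ // StrictMono f}

lemma tele_partial (c : ℝ) (hc : 0 < c) (N : ℕ) :
    ∑ n ∈ Finset.range N, ((c+n)*(c+n+1))⁻¹ = c⁻¹ - (c+N)⁻¹ := by
  induction N with
  | zero => simp
  | succ N ih =>
    rw [Finset.sum_range_succ, ih]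
    have h1 : (0:ℝ) < c + N := by positivity
    have h2 : (0:ℝ) < c + N + 1 := by positivity
    push_cast
    field_simp
    ring

lemma tele_summable (c : ℝ) (hc : 0 < c) :
    Summable (fun n : ℕ => ((c+n)*(c+n+1))⁻¹) := by
  apply summable_of_sum_range_le (c := c⁻¹) (fun n => by positivity)
  intro n
  rw [tele_partial c hc]
  have : (c+(n:ℝ))⁻¹ > 0 := by positivity
  linarith

lemma tele_tsum (c : ℝ) (hc : 0 < c) :
    ∑' n : ℕ, ((c+n)*(c+n+1))⁻¹ ≤ c⁻¹ := by
  apply Summable.tsum_le_of_sum_range_le (tele_summable c hc)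
  intro n
  rw [tele_partial c hc]
  have : (c+(n:ℝ))⁻¹ > 0 := by positivity
  linarith

lemma pw1 (c : ℝ) (hc : 0 < c) (k : ℕ) (hk : 1 ≤ k) (x : ℝ) (hx : c ≤ x) :
    (x ^ k)⁻¹ ≤ (1+c⁻¹)^(k-1) * x⁻¹ := by
  have hx0 : 0 < x := lt_of_lt_of_le hc hx
  have hinv : x⁻¹ ≤ 1 + c⁻¹ := by
    have h1 : x⁻¹ ≤ c⁻¹ := by gcongr
    have h2 : (0:ℝ) < c⁻¹ := by positivity
    linarith
  calc (x ^ k)⁻¹ = (x⁻¹)^(k-1) * x⁻¹ := by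
        rw [← pow_succ, ← inv_pow, Nat.sub_add_cancel hk]
    _ ≤ (1+c⁻¹)^(k-1) * x⁻¹ := by gcongr

lemma pw2 (c : ℝ) (hc : 0 < c) (k : ℕ) (hk : 2 ≤ k) (n : ℕ) :
    ((c + n) ^ k)⁻¹ ≤ (1+c⁻¹)^(k-1) * ((c+n)*(c+n+1))⁻¹ := by
  have hx0 : (0:ℝ) < c + n := by positivity
  have h2 : (0:ℝ) < c + n + 1 := by positivity
  have hinv : (c+(n:ℝ))⁻¹ ≤ 1 + c⁻¹ := by
    have h : (c+(n:ℝ))⁻¹ ≤ c⁻¹ := by gcongr; linarith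
    have : (0:ℝ) < c⁻¹ := by positivity
    linarith
  have key : (c+(n:ℝ))⁻¹ ≤ (1+c⁻¹) * (c+n+1)⁻¹ := by
    rw [← sub_nonneg]
    have expand : (1+c⁻¹) * (c+(n:ℝ)+1)⁻¹ - (c+n)⁻¹ = (c⁻¹*n) / ((c+n)*(c+n+1)) := by
      field_simp
      ring
    rw [expand]
    positivity
  have hk1 : k - 1 = (k-2)+1 := by omega
  calc ((c+(n:ℝ)) ^ k)⁻¹ = ((c+n)⁻¹)^(k-2) * ((c+n)⁻¹ * (c+n)⁻¹) := by
        rw [← inv_pow, ← mul_assoc, ← pow_succ, ← pow_succ]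
        congr 1
        omega
    _ ≤ (1+c⁻¹)^(k-2) * ((1+c⁻¹) * (c+n+1)⁻¹ * (c+n)⁻¹) := by
        exact mul_le_mul (pow_le_pow_left₀ (by positivity) hinv _)
          (mul_le_mul key le_rfl (by positivity) (by positivity)) (by positivity) (by positivity)
    _ = (1+c⁻¹)^(k-1) * ((c+n)*(c+n+1))⁻¹ := by
        rw [hk1, pow_succ, mul_inv]
        ring



noncomputable def smEquiv (m : ℕ) :
    SM (m+1) ≃ ℕ × SM m where
  toFun f := (f.1 0, ⟨fun j => f.1 j.succ - (f.1 0 + 1), by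
    intro a b hab
    simp only []
    have h1 : f.1 0 < f.1 a.succ := f.2 (Fin.succ_pos a)
    have h2 : f.1 a.succ < f.1 b.succ := f.2 (by simpa using hab)
    omega⟩)
  invFun p := ⟨Fin.cons p.1 (fun j => p.1 + 1 + p.2.1 j), by
    intro a b hab
    induction a using Fin.cases with
    | zero =>
      induction b using Fin.cases with
      | zero => exact absurd hab (lt_irrefl _)
      | succ j => simp only [Fin.cons_zero, Fin.cons_succ]; omega
    | succ i =>
      induction b using Fin.cases with
      | zero => exact absurd hab (by simp [Fin.lt_iff_val_lt_val])
      | succ j =>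
        simp only [Fin.cons_succ]
        have : p.2.1 i < p.2.1 j := p.2.2 (by simpa using hab)
        omega⟩
  left_inv f := by
    ext j
    induction j using Fin.cases with
    | zero => simp
    | succ j =>
      simp only [Fin.cons_succ]
      have : f.1 0 < f.1 j.succ := f.2 (Fin.succ_pos j)
      omega
  right_inv p := by
    ext j
    · simp
    · simp only [Fin.cons_succ]
      simp only [Fin.cons_zero]
      omega

/-- decomposition of the product along `smEquiv`. -/
lemma prod_smEquiv_symm {M : Type*} [CommMonoid M] (m : ℕ) (φ : ℕ → Fin (m+1) → M)
    (n : ℕ) (g : SM m) :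
    (∏ j : Fin (m+1), φ (((smEquiv m).symm (n, g)).1 j) j)
      = φ n 0 * ∏ j : Fin m, φ (n + 1 + g.1 j) j.succ := by
  show (∏ j : Fin (m+1), φ ((Fin.cons n (fun j => n + 1 + g.1 j) : Fin (m+1) → ℕ) j) j) = _
  rw [Fin.prod_univ_succ]
  simp only [Fin.cons_zero, Fin.cons_succ]



noncomputable def smOne : SM 1 ≃ ℕ where
  toFun f := f.1 0
  invFun n := ⟨fun _ => n, fun a b h => absurd (Subsingleton.elim a b) (ne_of_lt h)⟩
  left_inv f := by
    ext j
    have : j = 0 := Subsingleton.elim _ _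
    rw [this]
  right_inv n := rfl

lemma smOne_apply (f : SM 1) : smOne f = f.1 0 := rfl

lemma one_le_base (c : ℝ) (hc : 0 < c) : (1:ℝ) ≤ 1 + c⁻¹ := by
  have : (0:ℝ) < c⁻¹ := by positivity
  linarith

lemma real_main (m : ℕ) (e : Fin (m+1) → ℕ) (he : ∀ j, 1 ≤ e j)
    (hlast : 2 ≤ e (Fin.last m)) (c : ℝ) (hc : 0 < c) :
    Summable (fun f : SM (m+1) => ∏ j, ((c + (f.1 j : ℝ))^(e j))⁻¹) ∧
    (∑' f : SM (m+1), ∏ j, ((c + (f.1 j : ℝ))^(e j))⁻¹) ≤ (1+c⁻¹)^(∑ j, e j) * c⁻¹ := by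
  induction m generalizing c with
  | zero =>
    have he0 : 2 ≤ e 0 := hlast
    have hbd : ∀ n : ℕ, ((c + (n:ℝ))^(e 0))⁻¹ ≤ (1+c⁻¹)^(e 0 - 1) * ((c+n)*(c+n+1))⁻¹ :=
      fun n => pw2 c hc (e 0) he0 n
    have hSn : Summable (fun n : ℕ => ((c + (n:ℝ))^(e 0))⁻¹) :=
      Summable.of_nonneg_of_le (fun n => by positivity) hbd ((tele_summable c hc).mul_left _)
    have hkey : ∀ f : SM 1, (∏ j, ((c + (f.1 j : ℝ))^(e j))⁻¹) = ((c + (smOne f : ℝ))^(e 0))⁻¹ := by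
      intro f
      rw [Fin.prod_univ_one, smOne_apply]
    have hS : Summable (fun f : SM 1 => ∏ j, ((c + (f.1 j : ℝ))^(e j))⁻¹) := by
      rw [summable_congr hkey]
      exact (smOne.summable_iff (f := fun n : ℕ => ((c + (n:ℝ))^(e 0))⁻¹)).mpr hSn
    refine ⟨hS, ?_⟩
    rw [tsum_congr hkey, smOne.tsum_eq (f := fun n : ℕ => ((c + (n:ℝ))^(e 0))⁻¹)]
    calc (∑' n : ℕ, ((c + (n:ℝ))^(e 0))⁻¹)
        ≤ ∑' n : ℕ, (1+c⁻¹)^(e 0 - 1) * ((c+(n:ℝ))*(c+n+1))⁻¹ :=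
          Summable.tsum_le_tsum hbd hSn ((tele_summable c hc).mul_left _)
      _ = (1+c⁻¹)^(e 0 - 1) * ∑' n : ℕ, ((c+(n:ℝ))*(c+n+1))⁻¹ := tsum_mul_left
      _ ≤ (1+c⁻¹)^(e 0 - 1) * c⁻¹ := by
          have := tele_tsum c hc
          gcongr
      _ ≤ (1+c⁻¹)^(∑ j, e j) * c⁻¹ := by
          gcongr
          · exact one_le_base c hc
          · rw [Fin.sum_univ_one]; omega
  | succ m ih =>
    set E := smEquiv (m+1) with hE
    set W : ℕ := ∑ j : Fin (m+1), e j.succ with hW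
    have he' : ∀ j : Fin (m+1), 1 ≤ e j.succ := fun j => he j.succ
    have hlast' : 2 ≤ e (Fin.last m).succ := by rw [Fin.succ_last]; exact hlast
    have hkey : ∀ (n : ℕ) (g : SM (m+1)),
        (∏ j : Fin (m+2), ((c + ((E.symm (n,g)).1 j : ℝ))^(e j))⁻¹)
          = ((c+(n:ℝ))^(e 0))⁻¹ * ∏ j : Fin (m+1), ((c + (n:ℝ) + 1 + (g.1 j : ℝ))^(e j.succ))⁻¹ := by
      intro n g
      rw [prod_smEquiv_symm (m+1) (fun nn j => ((c + (nn:ℝ))^(e j))⁻¹) n g]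
      congr 1
      apply Finset.prod_congr rfl
      intro j _
      congr 2
      push_cast
      ring
    set G : ℕ × SM (m+1) → ℝ :=
      fun p => ((c+(p.1:ℝ))^(e 0))⁻¹ * ∏ j : Fin (m+1), ((c + (p.1:ℝ) + 1 + (p.2.1 j : ℝ))^(e j.succ))⁻¹
      with hG
    have ihn : ∀ n : ℕ,
        Summable (fun g : SM (m+1) => ∏ j, ((c + (n:ℝ) + 1 + (g.1 j : ℝ))^(e j.succ))⁻¹) ∧
        (∑' g : SM (m+1), ∏ j, ((c + (n:ℝ) + 1 + (g.1 j : ℝ))^(e j.succ))⁻¹)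
          ≤ (1+(c+(n:ℝ)+1)⁻¹)^W * (c+(n:ℝ)+1)⁻¹ := by
      intro n
      have hpos : (0:ℝ) < c + (n:ℝ) + 1 := by positivity
      have H := ih (fun j => e j.succ) he' hlast' (c + (n:ℝ) + 1) hpos
      rw [hW]
      exact H
    have hfiber : ∀ n : ℕ, Summable (fun g : SM (m+1) => G (n, g)) := by
      intro n
      simp only [hG]
      exact ((ihn n).1).mul_left _
    have hbound : ∀ n : ℕ, (∑' g : SM (m+1), G (n, g))
        ≤ (1+c⁻¹)^(e 0 - 1 + W) * ((c+(n:ℝ))*(c+(n:ℝ)+1))⁻¹ := by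
      intro n
      have h1 : (∑' g : SM (m+1), G (n, g))
          = ((c+(n:ℝ))^(e 0))⁻¹ * ∑' g : SM (m+1), ∏ j, ((c + (n:ℝ) + 1 + (g.1 j : ℝ))^(e j.succ))⁻¹ := by
        simp only [hG]
        exact tsum_mul_left
      rw [h1]
      have h2 : ((c+(n:ℝ))^(e 0))⁻¹ ≤ (1+c⁻¹)^(e 0 - 1) * (c+(n:ℝ))⁻¹ :=
        pw1 c hc (e 0) (he 0) _ (by linarith [Nat.cast_nonneg (α := ℝ) n])
      have h3 : (∑' g : SM (m+1), ∏ j, ((c + (n:ℝ) + 1 + (g.1 j : ℝ))^(e j.succ))⁻¹)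
          ≤ (1+c⁻¹)^W * (c+(n:ℝ)+1)⁻¹ := by
        refine le_trans (ihn n).2 ?_
        have hle : (1+(c+(n:ℝ)+1)⁻¹) ≤ 1+c⁻¹ := by
          have : (c+(n:ℝ)+1)⁻¹ ≤ c⁻¹ := by
            apply inv_anti₀ hc
            have : (0:ℝ) ≤ (n:ℝ) := Nat.cast_nonneg n
            linarith
          linarith
        exact mul_le_mul_of_nonneg_right
          (pow_le_pow_left₀ (by positivity) hle W) (by positivity)
      have hnn : (0:ℝ) ≤ ∑' g : SM (m+1), ∏ j, ((c + (n:ℝ) + 1 + (g.1 j : ℝ))^(e j.succ))⁻¹ :=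
        tsum_nonneg fun g => by positivity
      calc ((c+(n:ℝ))^(e 0))⁻¹ * (∑' g : SM (m+1), ∏ j, ((c + (n:ℝ) + 1 + (g.1 j : ℝ))^(e j.succ))⁻¹)
          ≤ ((1+c⁻¹)^(e 0 - 1) * (c+(n:ℝ))⁻¹) * ((1+c⁻¹)^W * (c+(n:ℝ)+1)⁻¹) :=
            mul_le_mul h2 h3 hnn (by positivity)
        _ = (1+c⁻¹)^(e 0 - 1 + W) * ((c+(n:ℝ))*(c+(n:ℝ)+1))⁻¹ := by
            rw [pow_add, mul_inv]; ring
    have hGnn : ∀ p : ℕ × SM (m+1), 0 ≤ G p := by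
      intro p
      rw [hG]
      positivity
    have hsums : Summable (fun n : ℕ => ∑' g : SM (m+1), G (n,g)) :=
      Summable.of_nonneg_of_le (fun n => tsum_nonneg fun g => hGnn _) hbound
        ((tele_summable c hc).mul_left _)
    have hGsummable : Summable G := (summable_prod_of_nonneg hGnn).mpr ⟨hfiber, hsums⟩
    have hkey' : ∀ p : ℕ × SM (m+2-1),
        (∏ j : Fin (m+2), ((c + (((E.symm p).1 j : ℕ) : ℝ))^(e j))⁻¹) = G p := by
      rintro ⟨n, g⟩
      simp only [hG]
      exact hkey n g
    have hFsummable : Summable (fun f : SM (m+2) => ∏ j, ((c + (f.1 j : ℝ))^(e j))⁻¹) := by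
      refine (Equiv.summable_iff E.symm).mp ?_
      exact hGsummable.congr fun p => (hkey' p).symm
    refine ⟨hFsummable, ?_⟩
    have e1 : (∑' f : SM (m+2), ∏ j, ((c + (f.1 j : ℝ))^(e j))⁻¹) = ∑' p, G p := by
      rw [← Equiv.tsum_eq E.symm (fun f : SM (m+2) => ∏ j, ((c + (f.1 j : ℝ))^(e j))⁻¹)]
      exact tsum_congr hkey'
    rw [e1, Summable.tsum_prod hGsummable]
    calc (∑' n : ℕ, ∑' g : SM (m+1), G (n, g))
        ≤ ∑' n : ℕ, (1+c⁻¹)^(e 0 - 1 + W) * ((c+(n:ℝ))*(c+(n:ℝ)+1))⁻¹ :=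
          Summable.tsum_le_tsum hbound hsums ((tele_summable c hc).mul_left _)
      _ = (1+c⁻¹)^(e 0 - 1 + W) * ∑' n : ℕ, ((c+(n:ℝ))*(c+(n:ℝ)+1))⁻¹ := tsum_mul_left
      _ ≤ (1+c⁻¹)^(e 0 - 1 + W) * c⁻¹ := by
          have := tele_tsum c hc
          gcongr
      _ ≤ (1+c⁻¹)^(∑ j, e j) * c⁻¹ := by
          gcongr
          · exact one_le_base c hc
          · rw [Fin.sum_univ_succ, hW]
            omega

lemma summable_complex (m : ℕ) (e : Fin (m+1) → ℕ) (he : ∀ j, 1 ≤ e j)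
    (hlast : 2 ≤ e (Fin.last m)) (z : ℂ) (hz : 0 < z.re) :
    Summable (fun f : SM (m+1) => ∏ j, ((z + ((f.1 j : ℕ) : ℂ))^(e j))⁻¹) := by
  apply Summable.of_norm
  apply Summable.of_nonneg_of_le (fun f => norm_nonneg _) ?_
    (real_main m e he hlast z.re hz).1
  intro f
  rw [norm_prod]
  apply Finset.prod_le_prod (fun j _ => norm_nonneg _)
  intro j _
  rw [norm_inv, norm_pow]
  have h1 : (0:ℝ) < z.re + (f.1 j : ℕ) := by positivity
  have h2 : z.re + ((f.1 j : ℕ) : ℝ) ≤ ‖z + ((f.1 j : ℕ) : ℂ)‖ := by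
    have := Complex.re_le_norm (z + ((f.1 j : ℕ) : ℂ))
    simpa using this
  gcongr

lemma hp_congr (s : List ℂ) {m : ℕ} (h : s.length = m) (z : ℂ) :
    hurwitzPolyzeta s z
      = ∑' f : SM m, ∏ j : Fin m, (z + ((f.1 j : ℕ) : ℂ)) ^ (-(s.get (Fin.cast h.symm j))) := by
  subst h
  rfl

lemma hp_nat (ks : List ℕ) (z : ℂ) :
    hurwitzPolyzeta (ks.map (fun k : ℕ => (k : ℂ))) z
      = ∑' f : SM ks.length, ∏ j : Fin ks.length, ((z + ((f.1 j : ℕ) : ℂ))^(ks.get j))⁻¹ := by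
  have hlen : (ks.map (fun k : ℕ => (k : ℂ))).length = ks.length := List.length_map _
  rw [hp_congr (ks.map (fun k : ℕ => (k : ℂ))) hlen z]
  refine tsum_congr fun f => Finset.prod_congr rfl fun j _ => ?_
  have h : (ks.map (fun k : ℕ => (k : ℂ))).get (Fin.cast hlen.symm j) = ((ks.get j : ℕ) : ℂ) := by
    simp [List.get_eq_getElem, List.getElem_map]
  rw [h, Complex.cpow_neg, Complex.cpow_natCast]

lemma hp_cons (k : ℕ) (ks : List ℕ) (z : ℂ) :
    hurwitzPolyzeta ((k :: ks).map (fun k : ℕ => (k : ℂ))) z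
      = ∑' f : SM (ks.length+1),
          ∏ j : Fin (ks.length+1), ((z + ((f.1 j : ℕ) : ℂ))^((k :: ks).get j))⁻¹ :=
  hp_nat (k :: ks) z

noncomputable def Kfun (m : ℕ) (e : Fin (m+1) → ℕ) (w : ℂ) (p : ℕ × SM m) : ℂ :=
  ((w + (p.1 : ℂ))^(e 0))⁻¹
    * ∏ j : Fin m, ((w + (p.1 : ℂ) + 1 + ((p.2.1 j : ℕ) : ℂ))^(e j.succ))⁻¹

lemma key_decomp (m : ℕ) (e : Fin (m+1) → ℕ) (w : ℂ) (n : ℕ) (g : SM m) :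
    (∏ j : Fin (m+1), ((w + ((((smEquiv m).symm (n, g)).1 j : ℕ) : ℂ))^(e j))⁻¹)
      = Kfun m e w (n, g) := by
  rw [prod_smEquiv_symm m (fun nn j => ((w + (nn : ℂ))^(e j))⁻¹) n g]
  unfold Kfun
  congr 1
  refine Finset.prod_congr rfl fun j _ => ?_
  congr 2
  push_cast
  ring

lemma K_summable (m : ℕ) (e : Fin (m+1) → ℕ) (w : ℂ)
    (hw : Summable (fun f : SM (m+1) => ∏ j, ((w + ((f.1 j : ℕ) : ℂ))^(e j))⁻¹)) :
    Summable (Kfun m e w) := by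
  have := (Equiv.summable_iff (smEquiv m).symm
    (f := fun f : SM (m+1) => ∏ j, ((w + ((f.1 j : ℕ) : ℂ))^(e j))⁻¹)).mpr hw
  exact this.congr fun p => key_decomp m e w p.1 p.2

lemma expand (m : ℕ) (e : Fin (m+1) → ℕ) (w : ℂ)
    (hw : Summable (fun f : SM (m+1) => ∏ j, ((w + ((f.1 j : ℕ) : ℂ))^(e j))⁻¹)) :
    (∑' f : SM (m+1), ∏ j, ((w + ((f.1 j : ℕ) : ℂ))^(e j))⁻¹)
      = ∑' n : ℕ, ∑' g : SM m, Kfun m e w (n, g) := by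
  rw [← Equiv.tsum_eq (smEquiv m).symm
    (fun f : SM (m+1) => ∏ j, ((w + ((f.1 j : ℕ) : ℂ))^(e j))⁻¹)]
  rw [tsum_congr (fun p : ℕ × SM m => key_decomp m e w p.1 p.2)]
  exact Summable.tsum_prod (K_summable m e w hw)

lemma K_shift (m : ℕ) (e : Fin (m+1) → ℕ) (z : ℂ) (n : ℕ) (g : SM m) :
    Kfun m e z (n+1, g) = Kfun m e (z+1) (n, g) := by
  unfold Kfun
  congr 1
  · congr 2
    push_cast
    ring
  · refine Finset.prod_congr rfl fun j _ => ?_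
    congr 2
    push_cast
    ring

lemma split (m : ℕ) (e : Fin (m+1) → ℕ) (z : ℂ)
    (h : Summable (fun f : SM (m+1) => ∏ j, ((z + ((f.1 j : ℕ) : ℂ))^(e j))⁻¹))
    (h1 : Summable (fun f : SM (m+1) => ∏ j, ((z + 1 + ((f.1 j : ℕ) : ℂ))^(e j))⁻¹)) :
    (∑' f : SM (m+1), ∏ j, ((z + ((f.1 j : ℕ) : ℂ))^(e j))⁻¹)
      = (z^(e 0))⁻¹ * (∑' g : SM m, ∏ j : Fin m, ((z + 1 + ((g.1 j : ℕ) : ℂ))^(e j.succ))⁻¹)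
        + ∑' f : SM (m+1), ∏ j, ((z + 1 + ((f.1 j : ℕ) : ℂ))^(e j))⁻¹ := by
  rw [expand m e z h, expand m e (z+1) h1]
  have houter : Summable (fun n : ℕ => ∑' g : SM m, Kfun m e z (n, g)) :=
    (K_summable m e z h).prod
  rw [Summable.tsum_eq_zero_add houter]
  congr 1
  · have h0 : ∀ g : SM m, Kfun m e z (0, g)
        = (z^(e 0))⁻¹ * ∏ j : Fin m, ((z + 1 + ((g.1 j : ℕ) : ℂ))^(e j.succ))⁻¹ := by
      intro g
      unfold Kfun
      congr 1
      · norm_num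
      · refine Finset.prod_congr rfl fun j _ => ?_
        congr 2
        push_cast
        ring
    rw [tsum_congr h0]
    exact tsum_mul_left
  · exact tsum_congr fun n => tsum_congr fun g => K_shift m e z n g


/-- The difference equation
`ζ(k₁,…,k_r|z+1) − ζ(k₁,…,k_r|z) = −z^{−k₁}·ζ(k₂,…,k_r|z+1)`. -/
theorem hurwitzPolyzeta_difference_eq
    (k₁ : ℕ) (ks : List ℕ)
    (hk₁ : 1 ≤ k₁) (hks : ∀ k ∈ ks, 1 ≤ k)
    (hlast : 2 ≤ (k₁ :: ks).getLast (List.cons_ne_nil _ _))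
    (z : ℂ) (hz : 0 < z.re) :
    hurwitzPolyzeta ((k₁ :: ks).map (fun k => (k : ℂ))) (z + 1)
      - hurwitzPolyzeta ((k₁ :: ks).map (fun k => (k : ℂ))) z
      = -(z ^ (-(k₁ : ℂ))) * hurwitzPolyzeta (ks.map (fun k => (k : ℂ))) (z + 1) := by
  set m := ks.length with hm
  set e : Fin (m+1) → ℕ := fun j => (k₁ :: ks).get j with he_def
  have he : ∀ j, 1 ≤ e j := by
    intro j
    have hmem : (k₁ :: ks).get j ∈ k₁ :: ks := List.get_mem (k₁ :: ks) j
    simp only [he_def]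
    rcases List.mem_cons.mp hmem with h | h
    · omega
    · exact hks _ h
  have hlast2 : 2 ≤ e (Fin.last m) := by
    simp only [he_def]
    rw [List.getLast_eq_getElem] at hlast
    simpa using hlast
  have h := summable_complex m e he hlast2 z hz
  have h1 : Summable (fun f : SM (m+1) => ∏ j, ((z + 1 + ((f.1 j : ℕ) : ℂ))^(e j))⁻¹) := by
    have := summable_complex m e he hlast2 (z+1) (by simp [Complex.add_re]; linarith)
    exact this
  have hco : ∀ (l : List ℕ),
      (l.map (fun k => (k : ℂ)) : List ℂ) = List.map (fun k : ℕ => (k : ℂ)) l := by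
    intro l
    induction l with
    | nil => rfl
    | cons a t ih => simpa using ih
  rw [hco, hco]
  rw [hp_cons k₁ ks z, hp_cons k₁ ks (z+1), hp_nat ks (z+1)]
  rw [split m e z h h1]
  have hT : (∑' g : SM m, ∏ j : Fin m, ((z + 1 + ((g.1 j : ℕ) : ℂ))^(e j.succ))⁻¹)
      = ∑' g : SM m, ∏ j : Fin m, ((z + 1 + ((g.1 j : ℕ) : ℂ))^(ks.get j))⁻¹ := by
    exact tsum_congr fun g => Finset.prod_congr rfl fun j _ => rfl
  have hcpow : z ^ (-(k₁ : ℂ)) = (z^(e 0))⁻¹ := by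
    rw [Complex.cpow_neg, Complex.cpow_natCast]
    rfl
  rw [hT, hcpow]
  ring
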